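/- Let p : ℕ → (1,∞) be such that ∏_{k=1}^∞ 2^{1 − 1/p(k)} < 2. Then the space ℓ^{p(·)} is not weakly locally uniformly rotund: there exist a vector x with Φ_p(x) = 1, a sequence (x_n) with Φ_p(x_n) = 1 for all n and Φ_p(x + x_n) → 2 as n → ∞, and a continuous linear functional f on ℓ^{p(·)} such that f(x_n) does not converge to f(x). -/

import Mathlib

open scoped ENNReal

/-- `t ⊞_p s`: for `p < ∞`, `(t^p + s^p)^(1/p)`; for `p = ∞`, `max t s`. -/
noncomputable def boxPlus (p : ℝ≥0∞) (t s : ℝ) : ℝ :=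
  if p = ∞ then max t s else (t ^ p.toReal + s ^ p.toReal) ^ (1 / p.toReal)

/-- The recursively defined seminorms `|||x|||_(k)` (0-indexed). -/
noncomputable def seqNorm (p : ℕ → ℝ≥0∞) (x : ℕ → ℝ) : ℕ → ℝ
  | 0 => boxPlus (p 0) |x 0| |x 1|
  | k + 1 => boxPlus (p (k + 1)) (seqNorm p x k) |x (k + 2)|

/-- `Φ_p(x) = lim_k |||x|||_(k)`, as the supremum of the nondecreasing sequence. -/
noncomputable def Phi (p : ℕ → ℝ≥0∞) (x : ℕ → ℝ) : ℝ≥0∞ :=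
  ⨆ k, ENNReal.ofReal (seqNorm p x k)

/-- `x` is a bounded real sequence, i.e. `x ∈ ℓ^∞`. -/
def IsBddSeq (x : ℕ → ℝ) : Prop := ∃ M : ℝ, ∀ n, |x n| ≤ M

/-- Membership in the variable exponent space `ℓ^{p(·)}`. -/
def MemVLp (p : ℕ → ℝ≥0∞) (x : ℕ → ℝ) : Prop := IsBddSeq x ∧ Phi p x < ⊤

/-- The exponent function `ℕ → [1,∞]` associated with a real exponent function. -/
noncomputable def toE (p : ℕ → ℝ) : ℕ → ℝ≥0∞ := fun k => ENNReal.ofReal (p k)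

noncomputable def uv (m : ℕ) : ℕ → ℝ := fun i => if i = m then 1 else 0

section helpers

variable {p : ℕ → ℝ}

lemma toE_ne_top (p : ℕ → ℝ) (k : ℕ) : toE p k ≠ ∞ := ENNReal.ofReal_ne_top

lemma boxPlus_toE (hp : ∀ k, 1 < p k) (k : ℕ) (t s : ℝ) :
    boxPlus (toE p k) t s = (t ^ p k + s ^ p k) ^ (1 / p k) := by
  rw [boxPlus, if_neg (toE_ne_top p k), toE, ENNReal.toReal_ofReal (by linarith [hp k])]

lemma bp_zero_zero (hp : ∀ k, 1 < p k) (k : ℕ) : boxPlus (toE p k) 0 0 = 0 := by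
  have hq : p k ≠ 0 := by have := hp k; linarith
  rw [boxPlus_toE hp, Real.zero_rpow hq, add_zero, Real.zero_rpow (one_div_ne_zero hq)]

lemma bp_t_zero (hp : ∀ k, 1 < p k) (k : ℕ) {t : ℝ} (ht : 0 ≤ t) :
    boxPlus (toE p k) t 0 = t := by
  have hq : p k ≠ 0 := by have := hp k; linarith
  rw [boxPlus_toE hp, Real.zero_rpow hq, add_zero, ← Real.rpow_mul ht,
    mul_one_div_cancel hq, Real.rpow_one]

lemma bp_zero_one (hp : ∀ k, 1 < p k) (k : ℕ) : boxPlus (toE p k) 0 1 = 1 := by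
  have hq : p k ≠ 0 := by have := hp k; linarith
  rw [boxPlus_toE hp, Real.zero_rpow hq, Real.one_rpow, zero_add, Real.one_rpow]

lemma bp_one_one (hp : ∀ k, 1 < p k) (k : ℕ) :
    boxPlus (toE p k) 1 1 = 2 ^ (1 / p k) := by
  rw [boxPlus_toE hp, Real.one_rpow]
  norm_num

lemma seqNorm_uv (hp : ∀ k, 1 < p k) (m k : ℕ) :
    seqNorm (toE p) (uv m) k = if m ≤ k + 1 then 1 else 0 := by
  induction k with
  | zero =>
    rw [seqNorm]
    rcases Nat.lt_or_ge m 2 with h | h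
    · rw [if_pos (by omega)]
      interval_cases m
      · rw [show |uv 0 0| = 1 by simp [uv], show |uv 0 1| = 0 by simp [uv],
          bp_t_zero hp 0 zero_le_one]
      · rw [show |uv 1 0| = 0 by simp [uv], show |uv 1 1| = 1 by simp [uv],
          bp_zero_one hp 0]
    · rw [if_neg (by omega), show |uv m 0| = 0 by simp [uv] <;> omega,
        show |uv m 1| = 0 by simp [uv] <;> omega, bp_zero_zero hp 0]
  | succ k ih =>
    rw [seqNorm, ih]
    rcases lt_trichotomy m (k + 2) with h | h | h
    · rw [if_pos (by omega), if_pos (by omega),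
        show |uv m (k + 2)| = 0 by simp [uv] <;> omega, bp_t_zero hp _ zero_le_one]
    · rw [if_neg (by omega), if_pos (by omega),
        show |uv m (k + 2)| = 1 by simp [uv, h.symm], bp_zero_one hp _]
    · rw [if_neg (by omega), if_neg (by omega),
        show |uv m (k + 2)| = 0 by simp [uv] <;> omega, bp_zero_zero hp _]

lemma Phi_uv (hp : ∀ k, 1 < p k) (m : ℕ) : Phi (toE p) (uv m) = 1 := by
  apply le_antisymm
  · apply iSup_le
    intro k
    rw [seqNorm_uv hp]
    split <;> simp
  · calc (1 : ℝ≥0∞) = ENNReal.ofReal (seqNorm (toE p) (uv m) m) := by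
          rw [seqNorm_uv hp, if_pos (by omega), ENNReal.ofReal_one]
      _ ≤ _ := le_iSup (fun k => ENNReal.ofReal (seqNorm (toE p) (uv m) k)) m

lemma seqNorm_sum (hp : ∀ k, 1 < p k) (j k : ℕ) :
    seqNorm (toE p) (uv 0 + uv (j + 2)) k =
      if k ≤ j then 1 else 2 ^ (1 / p (j + 1)) := by
  induction k with
  | zero =>
    rw [seqNorm, if_pos (Nat.zero_le j),
      show |(uv 0 + uv (j + 2)) 0| = 1 by simp [uv],
      show |(uv 0 + uv (j + 2)) 1| = 0 by simp [uv] <;> omega,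
      bp_t_zero hp 0 zero_le_one]
  | succ k ih =>
    rw [seqNorm, ih]
    rcases lt_trichotomy k j with h | h | h
    · rw [if_pos h.le, if_pos (by omega),
        show |(uv 0 + uv (j + 2)) (k + 2)| = 0 by simp [uv] <;> omega,
        bp_t_zero hp _ zero_le_one]
    · subst h
      rw [if_pos le_rfl, if_neg (by omega),
        show |(uv 0 + uv (k + 2)) (k + 2)| = 1 by simp [uv],
        bp_one_one hp _]
    · rw [if_neg (by omega), if_neg (by omega),
        show |(uv 0 + uv (j + 2)) (k + 2)| = 0 by simp [uv] <;> omega,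
        bp_t_zero hp _ (Real.rpow_nonneg (by norm_num) _)]

lemma one_le_pow (hp : ∀ k, 1 < p k) (j : ℕ) : (1 : ℝ) ≤ 2 ^ (1 / p (j + 1)) := by
  have h0 : (0 : ℝ) ≤ 1 / p (j + 1) := by
    have := hp (j + 1); positivity
  calc (1 : ℝ) = 2 ^ (0 : ℝ) := by rw [Real.rpow_zero]
    _ ≤ 2 ^ (1 / p (j + 1)) := Real.rpow_le_rpow_of_exponent_le one_le_two h0

lemma Phi_sum (hp : ∀ k, 1 < p k) (j : ℕ) :
    Phi (toE p) (uv 0 + uv (j + 2)) = ENNReal.ofReal (2 ^ (1 / p (j + 1))) := by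
  apply le_antisymm
  · apply iSup_le
    intro k
    rw [seqNorm_sum hp]
    split
    · exact ENNReal.ofReal_le_ofReal (one_le_pow hp j)
    · exact le_rfl
  · calc ENNReal.ofReal (2 ^ (1 / p (j + 1)))
        = ENNReal.ofReal (seqNorm (toE p) (uv 0 + uv (j + 2)) (j + 1)) := by
          rw [seqNorm_sum hp, if_neg (by omega)]
      _ ≤ _ := le_iSup (fun k => ENNReal.ofReal (seqNorm (toE p) (uv 0 + uv (j + 2)) k)) (j + 1)

lemma memVLp_uv (hp : ∀ k, 1 < p k) (m : ℕ) : MemVLp (toE p) (uv m) := by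
  constructor
  · exact ⟨1, fun n => by simp [uv]; split <;> norm_num⟩
  · rw [Phi_uv hp]; exact ENNReal.one_lt_top

end helpers

/-- If `p : ℕ → (1,∞)` satisfies `∏ₖ 2^{1-1/p(k)} = 2^{∑ₖ (1-1/p(k))} < 2`, then
`ℓ^{p(·)}` is not weakly locally uniformly rotund: there are a unit vector `x`,
a sequence `(xₙ)` of unit vectors with `‖x + xₙ‖ → 2`, and a continuous linear
functional `f` on `ℓ^{p(·)}` with `f(xₙ) ↛ f(x)`. -/
theorem not_weakly_LUR (p : ℕ → ℝ) (hp : ∀ k, 1 < p k)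
    (hsum : Summable fun k => 1 - 1 / p k)
    (hC : (2 : ℝ) ^ (∑' k, (1 - 1 / p k)) < 2) :
    ∃ (x : ℕ → ℝ) (xs : ℕ → ℕ → ℝ) (f : (ℕ → ℝ) → ℝ),
      MemVLp (toE p) x ∧ Phi (toE p) x = 1 ∧
      (∀ n, MemVLp (toE p) (xs n) ∧ Phi (toE p) (xs n) = 1) ∧
      Filter.Tendsto (fun n => Phi (toE p) (x + xs n)) Filter.atTop (nhds 2) ∧
      (∀ u v : ℕ → ℝ, MemVLp (toE p) u → MemVLp (toE p) v →
        f (u + v) = f u + f v) ∧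
      (∀ (c : ℝ) (u : ℕ → ℝ), MemVLp (toE p) u → f (c • u) = c * f u) ∧
      (∃ C : ℝ, ∀ u : ℕ → ℝ, MemVLp (toE p) u →
        |f u| ≤ C * (Phi (toE p) u).toReal) ∧
      ¬ Filter.Tendsto (fun n => f (xs n)) Filter.atTop (nhds (f x)) := by
  refine ⟨uv 0, fun n => uv (n + 2), fun u => u 0, memVLp_uv hp 0, Phi_uv hp 0,
    fun n => ⟨memVLp_uv hp _, Phi_uv hp _⟩, ?_, ?_, ?_, ?_, ?_⟩
  · -- Tendsto Phi(x + xs n) → 2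
    have heq : (fun n : ℕ => Phi (toE p) (uv 0 + (fun m : ℕ => uv (m + 2)) n))
        = fun n => ENNReal.ofReal (2 ^ (1 / p (n + 1))) :=
      funext fun n => Phi_sum hp n
    rw [heq]
    have h1 : Filter.Tendsto (fun n => 1 - 1 / p (n + 1)) Filter.atTop (nhds 0) :=
      hsum.tendsto_atTop_zero.comp (Filter.tendsto_add_atTop_nat 1)
    have h2 : Filter.Tendsto (fun n => 1 / p (n + 1)) Filter.atTop (nhds 1) := by
      have := (tendsto_const_nhds (x := (1 : ℝ)) (f := Filter.atTop (α := ℕ))).sub h1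
      simpa using this
    have h3 : Filter.Tendsto (fun n => (2 : ℝ) ^ (1 / p (n + 1)))
        Filter.atTop (nhds 2) := by
      have := (tendsto_const_nhds (x := (2 : ℝ)) (f := Filter.atTop (α := ℕ))).rpow h2
        (Or.inl two_ne_zero)
      simpa using this
    have h4 := (ENNReal.continuous_ofReal.tendsto 2).comp h3
    simpa [Function.comp_def] using h4
  · intro u v _ _; simp
  · intro c u _; simp
  · refine ⟨1, fun u hu => ?_⟩
    have hq0 : (0 : ℝ) < p 0 := by have := hp 0; linarith
    have hle : |u 0| ≤ seqNorm (toE p) u 0 := by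
      rw [show seqNorm (toE p) u 0 = boxPlus (toE p 0) |u 0| |u 1| from rfl,
        boxPlus_toE hp]
      calc |u 0| = (|u 0| ^ p 0) ^ (1 / p 0) := by
            rw [← Real.rpow_mul (abs_nonneg _), mul_one_div_cancel hq0.ne',
              Real.rpow_one]
        _ ≤ (|u 0| ^ p 0 + |u 1| ^ p 0) ^ (1 / p 0) := by
            apply Real.rpow_le_rpow (by positivity)
              (le_add_of_nonneg_right (by positivity)) (by positivity)
    have h0 : ENNReal.ofReal |u 0| ≤ Phi (toE p) u :=
      le_trans (ENNReal.ofReal_le_ofReal hle)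
        (le_iSup (fun k => ENNReal.ofReal (seqNorm (toE p) u k)) 0)
    rw [one_mul]
    exact ((ENNReal.ofReal_le_iff_le_toReal hu.2.ne).mp h0).trans' le_rfl
  · intro h
    have h0 : Filter.Tendsto (fun _ : ℕ => (0 : ℝ)) Filter.atTop (nhds 1) := by
      simp only [uv] at h
      simpa using h
    have := tendsto_nhds_unique h0 tendsto_const_nhds
    norm_num at this
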